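/- arXiv:math/0607615 — 4 statements merged into one kernel-verified Lean document; each statement's English description precedes it below -/
import Mathlib

section
/- The polynomial f := XYZ - ZYX in ℝ⟨X,Y,Z⟩ satisfies tr(f(A,B,C)) = 0 for all d ∈ ℕ and all symmetric matrices A,B,C ∈ ℝ^{d×d}, yet f is not cyclically equivalent to 0 (i.e., f is not a sum of commutators). -/
abbrev NCPoly (k : Type) [CommSemiring k] (n : ℕ) := MonoidAlgebra k (FreeMonoid (Fin n))

noncomputable def ncWord (k : Type) [CommSemiring k] {n : ℕ} (w : FreeMonoid (Fin n)) : NCPoly k n :=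
  MonoidAlgebra.of k (FreeMonoid (Fin n)) w

noncomputable def ncX (k : Type) [CommSemiring k] {n : ℕ} (i : Fin n) : NCPoly k n :=
  ncWord k (FreeMonoid.of i)

/-- The involution on `k⟨X⟩` fixing the variables and conjugating coefficients. -/
noncomputable def ncStar {k : Type} [CommSemiring k] [StarRing k] {n : ℕ} (f : NCPoly k n) : NCPoly k n :=
  MonoidAlgebra.ofCoeff (Finsupp.mapDomain FreeMonoid.reverse (Finsupp.mapRange star (star_zero k) f.coeff))

/-- `f` and `g` are cyclically equivalent: `f - g` is a sum of commutators. -/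
def IsCyclicEquiv {k : Type} [CommRing k] {n : ℕ} (f g : NCPoly k n) : Prop :=
  f - g ∈ AddSubmonoid.closure {x : NCPoly k n | ∃ p q, x = p * q - q * p}

/-- The quadratic module generated by the `1 - X_i^2`: all finite sums of
elements `g* g` and `g* (1 - X_i^2) g`. -/
noncomputable def QuadMod (k : Type) [CommRing k] [StarRing k] (n : ℕ) : AddSubmonoid (NCPoly k n) :=
  AddSubmonoid.closure
    ({x | ∃ g : NCPoly k n, x = ncStar g * g} ∪
     {x | ∃ (g : NCPoly k n) (i : Fin n), x = ncStar g * (1 - (ncX k i) ^ 2) * g})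

/-- Evaluation of a noncommutative polynomial at a tuple of matrices. -/
noncomputable def ncEval {k : Type} [CommRing k] {n s : ℕ}
    (A : Fin n → Matrix (Fin s) (Fin s) k) :
    NCPoly k n →ₐ[k] Matrix (Fin s) (Fin s) k :=
  MonoidAlgebra.lift k (Matrix (Fin s) (Fin s) k) (FreeMonoid (Fin n)) (FreeMonoid.lift A)

/-- A self-adjoint contraction matrix: `A* = A` and `1 - A²` positive semidefinite. -/
def IsSAContraction {k : Type} [CommRing k] [StarRing k] [PartialOrder k] [StarOrderedRing k]
    {s : ℕ} (A : Matrix (Fin s) (Fin s) k) : Prop :=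
  A.IsHermitian ∧ (1 - A * A).PosSemidef

noncomputable def fXYZ : NCPoly ℝ 3 :=
  ncX ℝ 0 * ncX ℝ 1 * ncX ℝ 2 - ncX ℝ 2 * ncX ℝ 1 * ncX ℝ 0

lemma ncEval_ncX {n s : ℕ} (M : Fin n → Matrix (Fin s) (Fin s) ℝ) (i : Fin n) :
    ncEval M (ncX ℝ i) = M i := by
  simp [ncEval, ncX, ncWord]

lemma ncEval_fXYZ {s : ℕ} (A B C : Matrix (Fin s) (Fin s) ℝ) :
    ncEval ![A, B, C] fXYZ = A * B * C - C * B * A := by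
  simp only [fXYZ, map_sub, map_mul, ncEval_ncX]
  simp

theorem stmt2 :
    (∀ (d : ℕ) (A B C : Matrix (Fin d) (Fin d) ℝ),
        A.IsHermitian → B.IsHermitian → C.IsHermitian →
        Matrix.trace (ncEval ![A, B, C] fXYZ) = 0) ∧
    ¬ IsCyclicEquiv fXYZ 0 := by
  constructor
  · intro d A B C hA hB hC
    rw [ncEval_fXYZ]
    have h : (A * B * C).conjTranspose = C * B * A := by
      rw [Matrix.conjTranspose_mul, Matrix.conjTranspose_mul, hA.eq, hB.eq, hC.eq,
        Matrix.mul_assoc]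
    rw [Matrix.trace_sub, ← h, Matrix.trace_conjTranspose]
    simp
  · intro h
    unfold IsCyclicEquiv at h
    rw [sub_zero] at h
    set A' : Matrix (Fin 2) (Fin 2) ℝ := !![0, 1; 0, 0]
    set B' : Matrix (Fin 2) (Fin 2) ℝ := !![0, 0; 1, 0]
    set C' : Matrix (Fin 2) (Fin 2) ℝ := !![1, 0; 0, 0]
    have key : ∀ x ∈ AddSubmonoid.closure {x : NCPoly ℝ 3 | ∃ p q, x = p * q - q * p},
        Matrix.trace (ncEval ![A', B', C'] x) = 0 := by
      intro x hx
      induction hx using AddSubmonoid.closure_induction with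
      | mem y hy =>
        obtain ⟨p, q, rfl⟩ := hy
        rw [map_sub, map_mul, map_mul, Matrix.trace_sub, Matrix.trace_mul_comm, sub_self]
      | zero => simp
      | add a b _ _ ha hb => rw [map_add, Matrix.trace_add, ha, hb, add_zero]
    have h1 := key fXYZ h
    rw [ncEval_fXYZ] at h1
    have hABC : A' * B' * C' = !![1, 0; 0, 0] := by
      ext i j
      fin_cases i <;> fin_cases j <;>
        simp [A', B', C', Matrix.mul_apply, Fin.sum_univ_two]
    have hCBA : C' * B' * A' = 0 := by
      ext i j
      fin_cases i <;> fin_cases j <;>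
        simp [A', B', C', Matrix.mul_apply, Fin.sum_univ_two]
    rw [hABC, hCBA, Matrix.trace_sub] at h1
    simp [Matrix.trace_fin_two] at h1
end

section
/- Let R be a ring with involution * and M ⊆ Sym R a quadratic module. Then the set H(M) := {g ∈ R : N - g*g ∈ M for some N ∈ ℕ} is closed under multiplication; more precisely, H(M) is a *-subring of R containing all elements g with N - g*g ∈ M. -/
/-- A quadratic module in a ring with involution. -/
def IsQuadraticModule {R : Type} [Ring R] [StarRing R] (M : Set R) : Prop :=
  (∀ a ∈ M, star a = a) ∧ (1 : R) ∈ M ∧ (∀ a ∈ M, ∀ b ∈ M, a + b ∈ M) ∧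
    ∀ (g : R), ∀ a ∈ M, star g * a * g ∈ M

/-- The ring of bounded elements `H(M)`. -/
def boundedElts {R : Type} [Ring R] [StarRing R] (M : Set R) : Set R :=
  {g | ∃ N : ℕ, (N : R) - star g * g ∈ M}

lemma natCast_mul_comm' {R : Type} [Ring R] (n : ℕ) (x : R) :
    (n : R) * x = x * (n : R) := (Nat.cast_commute n x).eq

theorem stmt5 {R : Type} [Ring R] [StarRing R] (M : Set R) (hM : IsQuadraticModule M) :
    (0 : R) ∈ boundedElts M ∧ (1 : R) ∈ boundedElts M ∧
    (∀ g ∈ boundedElts M, -g ∈ boundedElts M ∧ star g ∈ boundedElts M) ∧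
    (∀ g ∈ boundedElts M, ∀ h ∈ boundedElts M,
      g + h ∈ boundedElts M ∧ g * h ∈ boundedElts M) := by
  obtain ⟨hsym, h1, hadd, hconj⟩ := hM
  have h0 : (0 : R) ∈ M := by simpa using hconj 0 1 h1
  have hsq : ∀ g : R, star g * g ∈ M := fun g => by simpa using hconj g 1 h1
  have hsmul : ∀ (n : ℕ), ∀ a ∈ M, (n : R) * a ∈ M := by
    intro n
    induction n with
    | zero => intro a _; simpa using h0
    | succ k ih =>
      intro a ha
      have h := hadd _ (ih a ha) a ha
      have : ((k : R) + 1) * a = (k : R) * a + a := by rw [add_mul, one_mul]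
      push_cast
      rw [this]
      exact h
  have hb0 : (0 : R) ∈ boundedElts M := by
    refine ⟨1, ?_⟩
    simpa using h1
  have hb1 : (1 : R) ∈ boundedElts M := by
    refine ⟨2, ?_⟩
    have : ((2 : ℕ) : R) - star (1 : R) * 1 = 1 := by push_cast; norm_num
    rw [this]; exact h1
  have hbstar : ∀ g ∈ boundedElts M, star g ∈ boundedElts M := by
    rintro g ⟨N, hN⟩
    have hN1 : ((N + 1 : ℕ) : R) - star g * g ∈ M := by
      have h := hadd _ hN 1 h1
      have : ((N + 1 : ℕ) : R) - star g * g = ((N : R) - star g * g) + 1 := by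
        push_cast; noncomm_ring
      rw [this]; exact h
    refine ⟨(N + 1) * (N + 1), ?_⟩
    have m1 : star (star g) * (((N + 1 : ℕ) : R) - star g * g) * star g ∈ M :=
      hconj (star g) _ hN1
    have m2 : star (((N + 1 : ℕ) : R) - g * star g) * 1 *
        (((N + 1 : ℕ) : R) - g * star g) ∈ M := hconj _ 1 h1
    have m3 : (N : R) * (star (star g) * star g) ∈ M := hsmul N _ (hsq (star g))
    have key : (((N + 1) * (N + 1) : ℕ) : R) - star (star g) * star g =
        star (star g) * (((N + 1 : ℕ) : R) - star g * g) * star g +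
        star (((N + 1 : ℕ) : R) - g * star g) * 1 *
          (((N + 1 : ℕ) : R) - g * star g) +
        (N : R) * (star (star g) * star g) := by
      simp only [star_sub, star_mul, star_natCast, star_star, star_one]
      push_cast
      noncomm_ring
      simp only [natCast_mul_comm' _ (star g)]
      abel
    rw [key]
    exact hadd _ (hadd _ m1 _ m2) _ m3
  have hbneg : ∀ g ∈ boundedElts M, -g ∈ boundedElts M := by
    rintro g ⟨N, hN⟩
    exact ⟨N, by simpa using hN⟩
  have hbadd : ∀ g ∈ boundedElts M, ∀ h ∈ boundedElts M, g + h ∈ boundedElts M := by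
    rintro g ⟨Ng, hg⟩ h ⟨Nh, hh⟩
    refine ⟨2 * (Ng + Nh), ?_⟩
    have m1 : ((Ng : R) - star g * g) + ((Nh : R) - star h * h) ∈ M := hadd _ hg _ hh
    have m2 : (((Ng : R) - star g * g) + ((Nh : R) - star h * h)) +
        (((Ng : R) - star g * g) + ((Nh : R) - star h * h)) ∈ M := hadd _ m1 _ m1
    have m3 : star (g - h) * (g - h) ∈ M := hsq (g - h)
    have key : ((2 * (Ng + Nh) : ℕ) : R) - star (g + h) * (g + h) =
        ((((Ng : R) - star g * g) + ((Nh : R) - star h * h)) +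
          (((Ng : R) - star g * g) + ((Nh : R) - star h * h))) +
        star (g - h) * (g - h) := by
      simp only [star_add, star_sub]
      push_cast
      noncomm_ring
    rw [key]
    exact hadd _ m2 _ m3
  have hbmul : ∀ g ∈ boundedElts M, ∀ h ∈ boundedElts M, g * h ∈ boundedElts M := by
    rintro g ⟨Ng, hg⟩ h ⟨Nh, hh⟩
    refine ⟨Ng * Nh, ?_⟩
    have m1 : (Ng : R) * ((Nh : R) - star h * h) ∈ M := hsmul Ng _ hh
    have m2 : star h * ((Ng : R) - star g * g) * h ∈ M := hconj h _ hg
    have key : ((Ng * Nh : ℕ) : R) - star (g * h) * (g * h) =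
        (Ng : R) * ((Nh : R) - star h * h) + star h * ((Ng : R) - star g * g) * h := by
      simp only [star_mul]
      push_cast
      noncomm_ring
      rw [natCast_mul_comm' Ng (star h * h), natCast_mul_comm' Ng h]
      noncomm_ring
    rw [key]
    exact hadd _ m1 _ m2
  exact ⟨hb0, hb1, fun g hg => ⟨hbneg g hg, hbstar g hg⟩,
    fun g hg h hh => ⟨hbadd g hg h hh, hbmul g hg h hh⟩⟩
end

section
/- Let φ : k⟨X⟩ → k (k = ℝ or ℂ) be a linear map with φ(pq) = φ(qp) for all p,q, φ(1) = 1, φ(f*) = φ(f)*, and φ(M_k) ⊆ ℝ_{≥0}, where M_k is the quadratic module generated by 1 - X_1^2,...,1 - X_n^2. Then |φ(w)| ≤ 1 for every word w and φ(f*f) ≥ 0 for all f ∈ k⟨X⟩. -/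
section Aux
variable {k : Type} [CommRing k] [StarRing k] {n : ℕ}

noncomputable def ncStarHom : NCPoly k n →+ NCPoly k n :=
  MonoidAlgebra.coeffAddEquiv.symm.toAddMonoidHom.comp ((Finsupp.mapDomain.addMonoidHom FreeMonoid.reverse).comp
    ((Finsupp.mapRange.addMonoidHom (starAddEquiv (R := k)).toAddMonoidHom).comp
      MonoidAlgebra.coeffAddEquiv.toAddMonoidHom))

lemma ncStar_eq_hom (f : NCPoly k n) : ncStar f = ncStarHom f := rfl

lemma ncStar_add (f g : NCPoly k n) : ncStar (f + g) = ncStar f + ncStar g := by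
  simp [ncStar_eq_hom]

lemma ncStar_sub (f g : NCPoly k n) : ncStar (f - g) = ncStar f - ncStar g := by
  simp [ncStar_eq_hom]

lemma ncStar_single (w : FreeMonoid (Fin n)) (c : k) :
    ncStar (MonoidAlgebra.single w c) = MonoidAlgebra.single w.reverse (star c) := by
  simp [ncStar, MonoidAlgebra.coeff_single, Finsupp.mapRange_single, Finsupp.mapDomain_single,
    MonoidAlgebra.ofCoeff_single]

lemma ncStar_one : ncStar (1 : NCPoly k n) = 1 := by
  rw [MonoidAlgebra.one_def, ncStar_single, star_one]; rfl

lemma ncStar_smul (c : k) (f : NCPoly k n) : ncStar (c • f) = star c • ncStar f := by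
  induction f using MonoidAlgebra.induction_linear with
  | zero => simp [ncStar_eq_hom]
  | add f g hf hg => rw [smul_add, ncStar_add, hf, hg, ncStar_add, smul_add]
  | single a b =>
    rw [MonoidAlgebra.smul_single]
    show ncStar (MonoidAlgebra.single a (c * b)) = star c • ncStar (MonoidAlgebra.single a b)
    rw [ncStar_single, ncStar_single, star_mul', MonoidAlgebra.smul_single]
    rfl

lemma ncStar_mul (f g : NCPoly k n) : ncStar (f * g) = ncStar g * ncStar f := by
  induction f using MonoidAlgebra.induction_linear with
  | zero => simp [ncStar_eq_hom]
  | add f f' hf hf' => rw [add_mul, ncStar_add, hf, hf', ncStar_add, mul_add]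
  | single a b =>
    induction g using MonoidAlgebra.induction_linear with
    | zero => simp [ncStar_eq_hom]
    | add g g' hg hg' => rw [mul_add, ncStar_add, hg, hg', ncStar_add, add_mul]
    | single a' b' =>
      show ncStar (MonoidAlgebra.single a b * MonoidAlgebra.single a' b') = _
      rw [MonoidAlgebra.single_mul_single, ncStar_single, ncStar_single, ncStar_single,
        MonoidAlgebra.single_mul_single, FreeMonoid.reverse_mul, star_mul', mul_comm (star b') (star b)]

lemma ncStar_ncWord (w : FreeMonoid (Fin n)) : ncStar (ncWord k w) = ncWord k w.reverse := by
  show ncStar (MonoidAlgebra.single w 1) = MonoidAlgebra.single w.reverse 1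
  rw [ncStar_single, star_one]

lemma quadMod_conj (g : NCPoly k n) {m : NCPoly k n} (hm : m ∈ QuadMod k n) :
    ncStar g * m * g ∈ QuadMod k n := by
  induction hm using AddSubmonoid.closure_induction with
  | mem x hx =>
    rcases hx with ⟨h, rfl⟩ | ⟨h, i, rfl⟩
    · refine AddSubmonoid.subset_closure (Or.inl ⟨h * g, ?_⟩)
      rw [ncStar_mul]; noncomm_ring
    · refine AddSubmonoid.subset_closure (Or.inr ⟨h * g, i, ?_⟩)
      rw [ncStar_mul]; noncomm_ring
  | zero => simpa using (QuadMod k n).zero_mem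
  | add x y _ _ hx hy =>
    have : ncStar g * (x + y) * g = ncStar g * x * g + ncStar g * y * g := by noncomm_ring
    rw [this]; exact (QuadMod k n).add_mem hx hy

lemma word_mem (w : FreeMonoid (Fin n)) :
    (1 : NCPoly k n) - ncStar (ncWord k w) * ncWord k w ∈ QuadMod k n := by
  induction w using FreeMonoid.recOn with
  | one =>
    have : ncWord k (1 : FreeMonoid (Fin n)) = 1 := map_one _
    rw [this, ncStar_one, one_mul, sub_self]
    exact (QuadMod k n).zero_mem
  | of_mul i v hv =>
    have hw : ncWord k (FreeMonoid.of i * v) = ncX k i * ncWord k v := map_mul _ _ _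
    set X := ncX k i with hX
    set V := ncWord k v with hV
    have hsX : ncStar X = X := by
      show ncStar (ncWord k (FreeMonoid.of i)) = _
      rw [ncStar_ncWord]; rfl
    have key : (1 : NCPoly k n) - ncStar (ncX k i * V) * (ncX k i * V)
        = (1 - ncStar V * V) + ncStar V * (1 - X ^ 2) * V := by
      rw [ncStar_mul, hsX, ← hX]; noncomm_ring
    rw [hw, key]
    exact (QuadMod k n).add_mem hv
      (AddSubmonoid.subset_closure (Or.inr ⟨V, i, rfl⟩))

end Aux


theorem stmt9 {k : Type} [RCLike k] {n : ℕ} (φ : NCPoly k n →ₗ[k] k)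
    (htr : ∀ p q : NCPoly k n, φ (p * q) = φ (q * p))
    (h1 : φ 1 = 1)
    (hstar : ∀ f : NCPoly k n, φ (ncStar f) = star (φ f))
    (hM : ∀ a ∈ QuadMod k n, ∃ r : ℝ, 0 ≤ r ∧ φ a = algebraMap ℝ k r) :
    (∀ w : FreeMonoid (Fin n), ‖φ (ncWord k w)‖ ≤ 1) ∧
    (∀ f : NCPoly k n, ∃ r : ℝ, 0 ≤ r ∧ φ (ncStar f * f) = algebraMap ℝ k r) := by
  have hsq : ∀ f : NCPoly k n, ∃ r : ℝ, 0 ≤ r ∧ φ (ncStar f * f) = algebraMap ℝ k r := by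
    intro f
    exact hM _ (AddSubmonoid.subset_closure (Or.inl ⟨f, rfl⟩))
  refine ⟨?_, hsq⟩
  intro w
  set g := ncWord k w with hg
  set c := φ g with hc
  obtain ⟨s, hs0, hs⟩ := hsq g
  obtain ⟨r, hr0, hr⟩ := hM _ (word_mem w)
  -- s ≤ 1
  have hinj : Function.Injective (algebraMap ℝ k) := (algebraMap ℝ k).injective
  have hs1 : s ≤ 1 := by
    rw [map_sub, h1, hs] at hr
    have : algebraMap ℝ k (1 - s) = algebraMap ℝ k r := by
      rw [map_sub, map_one, hr]
    have := hinj this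
    linarith
  -- Cauchy-Schwarz with f = 1
  set h := g - c • (1 : NCPoly k n) with hh
  obtain ⟨t, ht0, ht⟩ := hsq h
  have hexp : φ (ncStar h * h) = algebraMap ℝ k s - c * star c := by
    have hsh : ncStar h = ncStar g - star c • 1 := by
      rw [hh, ncStar_sub, ncStar_smul, ncStar_one]
    have : ncStar h * h = ncStar g * g - c • ncStar g - star c • g + (star c * c) • 1 := by
      rw [hsh, hh]
      simp only [sub_mul, mul_sub, smul_mul_assoc, mul_smul_comm, mul_one, one_mul, smul_smul]
      ring_nf
      module
    rw [this]
    simp only [map_add, map_sub, map_smul, hs, hstar, h1, smul_eq_mul, mul_one, ← hc]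
    ring
  have hcc : c * star c = algebraMap ℝ k (‖c‖ ^ 2) := by
    rw [RCLike.star_def, RCLike.mul_conj, RCLike.algebraMap_eq_ofReal]
    push_cast
    ring
  have : algebraMap ℝ k (s - ‖c‖ ^ 2) = algebraMap ℝ k t := by
    rw [map_sub, ← hcc, ← hexp, ht]
  have hle : ‖c‖ ^ 2 ≤ s := by
    have := hinj this
    linarith
  have : ‖c‖ ^ 2 ≤ 1 := le_trans hle hs1
  nlinarith [norm_nonneg c]
end

section
/- Let f := Y X^4 Y + X Y^4 X - 3 X Y^2 X + 1 ∈ ℝ⟨X,Y⟩ (a noncommutative version of the Motzkin polynomial). Then f is cyclically equivalent to Y(1-X^2)^2 Y + X(1-Y^2)^2 X + (1-X^2)(1-Y^2), i.e., their difference is a sum of commutators in ℝ⟨X,Y⟩. -/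
noncomputable def ncMotzkin : NCPoly ℝ 2 :=
  ncX ℝ 1 * ncX ℝ 0 ^ 4 * ncX ℝ 1 + ncX ℝ 0 * ncX ℝ 1 ^ 4 * ncX ℝ 0
    - 3 * (ncX ℝ 0 * ncX ℝ 1 ^ 2 * ncX ℝ 0) + 1

theorem stmt18 :
    IsCyclicEquiv ncMotzkin
      (ncX ℝ 1 * (1 - ncX ℝ 0 ^ 2) ^ 2 * ncX ℝ 1
        + ncX ℝ 0 * (1 - ncX ℝ 1 ^ 2) ^ 2 * ncX ℝ 0
        + (1 - ncX ℝ 0 ^ 2) * (1 - ncX ℝ 1 ^ 2)) := by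
  unfold IsCyclicEquiv ncMotzkin
  set X : NCPoly ℝ 2 := ncX ℝ 0
  set Y : NCPoly ℝ 2 := ncX ℝ 1
  have key : X * Y ^ 4 * X + Y * X ^ 4 * Y - 3 * (X * Y ^ 2 * X) + 1
      - (Y * (1 - X ^ 2) ^ 2 * Y + X * (1 - Y ^ 2) ^ 2 * X
        + (1 - X ^ 2) * (1 - Y ^ 2))
      = ((Y * X) * (X * Y) - (X * Y) * (Y * X))
        + (Y * (X ^ 2 * Y) - (X ^ 2 * Y) * Y) := by
    noncomm_ring
  have h : Y * X ^ 4 * Y + X * Y ^ 4 * X - 3 * (X * Y ^ 2 * X) + 1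
      - (Y * (1 - X ^ 2) ^ 2 * Y + X * (1 - Y ^ 2) ^ 2 * X
        + (1 - X ^ 2) * (1 - Y ^ 2))
      = ((Y * X) * (X * Y) - (X * Y) * (Y * X))
        + (Y * (X ^ 2 * Y) - (X ^ 2 * Y) * Y) := by
    rw [← key]; noncomm_ring
  rw [h]
  exact AddSubmonoid.add_mem _
    (AddSubmonoid.subset_closure ⟨Y * X, X * Y, rfl⟩)
    (AddSubmonoid.subset_closure ⟨Y, X ^ 2 * Y, rfl⟩)
end
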